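/- arXiv:0809.0488 — 2 statements merged into one kernel-verified Lean document; each statement's English description precedes it below -/
import Mathlib

section
/- For every n ≥ 1, the number of full binary trees with n leaves avoiding the pattern t2 = node(L, node(node(L,L), L)) equals the number of full binary trees with n leaves avoiding the pattern t3 = node(node(L,L), node(L,L)). -/
inductive BTree : Type
  | leaf : BTree
  | node : BTree → BTree → BTree
  deriving DecidableEq

namespace BTree

def leaves : BTree → ℕ
  | leaf => 1
  | node l r => leaves l + leaves r

def Matches : BTree → BTree → Bool
  | _, leaf => true
  | leaf, node _ _ => false
  | node l r, node tl tr => Matches l tl && Matches r tr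

def Contains : BTree → BTree → Bool
  | leaf, t => Matches leaf t
  | node l r, t => Matches (node l r) t || Contains l t || Contains r t

def Avoids (T t : BTree) : Prop := Contains T t = false

end BTree

namespace BTree

def t2 : BTree := node leaf (node (node leaf leaf) leaf)
def t3 : BTree := node (node leaf leaf) (node leaf leaf)

lemma one_le_leaves (T : BTree) : 1 ≤ T.leaves := by
  induction T with
  | leaf => simp [leaves]
  | node l r ihl ihr => simp [leaves]; omega

lemma eq_leaf_of_leaves_eq_one {T : BTree} (h : T.leaves = 1) : T = leaf := by
  cases T with
  | leaf => rfl
  | node l r =>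
    have h1 := one_le_leaves l
    have h2 := one_le_leaves r
    simp [leaves] at h
    omega

lemma avoids_t2_node {l r : BTree} :
    Avoids (node l r) t2 ↔ Avoids l t2 ∧ Avoids r t2 ∧ ∀ a b c, r ≠ node (node a b) c := by
  cases r with
  | leaf => simp [Avoids, Contains, Matches, t2]
  | node rl rr =>
    cases rl <;> simp [Avoids, Contains, Matches, t2]

lemma avoids_t3_node {l r : BTree} :
    Avoids (node l r) t3 ↔ Avoids l t3 ∧ Avoids r t3 ∧ (l = leaf ∨ r = leaf) := by
  cases l <;> cases r <;> simp [Avoids, Contains, Matches, t3]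

def e2 : List Bool → BTree
  | [] => node leaf leaf
  | true :: bs => node (e2 bs) leaf
  | false :: bs =>
    match e2 bs with
    | leaf => leaf
    | node l r => node l (node leaf r)

def e3 : List Bool → BTree
  | [] => node leaf leaf
  | true :: bs => node leaf (e3 bs)
  | false :: bs => node (e3 bs) leaf

lemma e2_ne_leaf (bs : List Bool) : e2 bs ≠ leaf := by
  induction bs with
  | nil => simp [e2]
  | cons b bs ih =>
    cases b with
    | true => simp [e2]
    | false =>
      cases h : e2 bs with
      | leaf => exact absurd h ih
      | node l r => simp [e2, h]

lemma e3_ne_leaf (bs : List Bool) : e3 bs ≠ leaf := by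
  cases bs with
  | nil => simp [e3]
  | cons b bs => cases b <;> simp [e3]

lemma e2_leaves (bs : List Bool) : (e2 bs).leaves = bs.length + 2 := by
  induction bs with
  | nil => simp [e2, leaves]
  | cons b bs ih =>
    cases b with
    | true => simp [e2, leaves, ih]
    | false =>
      cases h : e2 bs with
      | leaf => exact absurd h (e2_ne_leaf bs)
      | node l r =>
        rw [h] at ih
        simp [e2, h, leaves] at *
        omega

lemma e3_leaves (bs : List Bool) : (e3 bs).leaves = bs.length + 2 := by
  induction bs with
  | nil => simp [e3, leaves]
  | cons b bs ih =>
    cases b <;> (simp [e3, leaves, ih]; try omega)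

lemma e2_right_ok (bs : List Bool) :
    ∃ l r, e2 bs = node l r ∧ (r = leaf ∨ ∃ r', r = node leaf r') := by
  induction bs with
  | nil => exact ⟨leaf, leaf, rfl, Or.inl rfl⟩
  | cons b bs ih =>
    obtain ⟨l, r, h, hr⟩ := ih
    cases b with
    | true => exact ⟨e2 bs, leaf, rfl, Or.inl rfl⟩
    | false => exact ⟨l, node leaf r, by simp [e2, h], Or.inr ⟨r, rfl⟩⟩

lemma e2_avoids (bs : List Bool) : Avoids (e2 bs) t2 := by
  induction bs with
  | nil => exact rfl
  | cons b bs ih =>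
    cases b with
    | true =>
      show Avoids (node (e2 bs) leaf) t2
      rw [avoids_t2_node]
      exact ⟨ih, rfl, by simp⟩
    | false =>
      obtain ⟨l, r, h, hr⟩ := e2_right_ok bs
      have he : e2 (false :: bs) = node l (node leaf r) := by simp [e2, h]
      rw [he]
      rw [h, avoids_t2_node] at ih
      obtain ⟨hl, hrr, _⟩ := ih
      rw [avoids_t2_node]
      refine ⟨hl, ?_, ?_⟩
      · rw [avoids_t2_node]
        refine ⟨rfl, hrr, ?_⟩
        rcases hr with h1 | ⟨r', h1⟩ <;> simp [h1]
      · simp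

lemma e3_avoids (bs : List Bool) : Avoids (e3 bs) t3 := by
  induction bs with
  | nil => exact rfl
  | cons b bs ih =>
    cases b with
    | true =>
      show Avoids (node leaf (e3 bs)) t3
      rw [avoids_t3_node]
      exact ⟨rfl, ih, Or.inl rfl⟩
    | false =>
      show Avoids (node (e3 bs) leaf) t3
      rw [avoids_t3_node]
      exact ⟨ih, rfl, Or.inr rfl⟩

lemma e2_inj : Function.Injective e2 := by
  intro bs bs' h
  induction bs generalizing bs' with
  | nil =>
    cases bs' with
    | nil => rfl
    | cons b' bs' =>
      obtain ⟨l', r', h2', _⟩ := e2_right_ok bs'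
      cases b' <;> simp [e2, h2'] at h
  | cons b bs ih =>
    obtain ⟨l, r, h2, _⟩ := e2_right_ok bs
    cases bs' with
    | nil =>
      cases b <;> simp [e2, h2] at h
    | cons b' bs' =>
      obtain ⟨l', r', h2', _⟩ := e2_right_ok bs'
      cases b <;> cases b' <;> simp [e2, h2, h2'] at h
      all_goals {
        have : e2 bs = e2 bs' := by rw [h2, h2', h.1, h.2]
        rw [ih this] }

lemma e3_inj : Function.Injective e3 := by
  intro bs bs' h
  induction bs generalizing bs' with
  | nil =>
    cases bs' with
    | nil => rfl
    | cons b' bs' =>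
      cases b' <;> simp [e3] at h <;> exact absurd h.symm (e3_ne_leaf bs')
  | cons b bs ih =>
    cases bs' with
    | nil =>
      cases b <;> simp [e3] at h <;> exact absurd h (e3_ne_leaf bs)
    | cons b' bs' =>
      cases b <;> cases b' <;> simp [e3] at h
      · rw [ih h]
      · exact absurd h.1 (e3_ne_leaf bs)
      · exact absurd h.2 (e3_ne_leaf bs)
      · rw [ih h]

lemma e2_surj : ∀ n (T : BTree), T.leaves = n + 2 → Avoids T t2 →
    ∃ bs : List Bool, bs.length = n ∧ e2 bs = T := by
  intro n
  induction n using Nat.strong_induction_on with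
  | _ n ih =>
    intro T hT hA
    cases T with
    | leaf => simp [leaves] at hT
    | node l r =>
      rw [avoids_t2_node] at hA
      obtain ⟨hl, hr, hshape⟩ := hA
      have hll := one_le_leaves l
      have hrl := one_le_leaves r
      simp [leaves] at hT
      cases r with
      | leaf =>
        cases l with
        | leaf =>
          have : n = 0 := by simp [leaves] at hT; omega
          subst this
          exact ⟨[], rfl, rfl⟩
        | node a b =>
          have ha := one_le_leaves a
          have hb := one_le_leaves b
          have h2 : leaves (node a b) = (n - 1) + 2 := by
            simp [leaves] at *; omega
          have hn : n - 1 < n := by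
            simp [leaves] at *; omega
          obtain ⟨bs, hlen, heq⟩ := ih (n - 1) hn _ h2 hl
          refine ⟨true :: bs, ?_, by simp [e2, heq]⟩
          simp [hlen]
          simp [leaves] at *; omega
      | node rl rr =>
        have hrl_leaf : rl = leaf := by
          cases rl with
          | leaf => rfl
          | node a b => exact absurd rfl (hshape a b rr)
        subst hrl_leaf
        rw [avoids_t2_node] at hr
        obtain ⟨_, hrr, hrrshape⟩ := hr
        have h1l := one_le_leaves l
        have h1rr := one_le_leaves rr
        have hT' : leaves (node l rr) = (n - 1) + 2 := by
          simp [leaves] at *; omega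
        have hA' : Avoids (node l rr) t2 := by
          rw [avoids_t2_node]
          exact ⟨hl, hrr, hrrshape⟩
        have hn : n - 1 < n := by
          simp [leaves] at *; omega
        obtain ⟨bs, hlen, heq⟩ := ih (n - 1) hn _ hT' hA'
        refine ⟨false :: bs, ?_, ?_⟩
        · simp [hlen]
          simp [leaves] at *; omega
        · simp [e2, heq]

lemma e3_surj : ∀ n (T : BTree), T.leaves = n + 2 → Avoids T t3 →
    ∃ bs : List Bool, bs.length = n ∧ e3 bs = T := by
  intro n
  induction n using Nat.strong_induction_on with
  | _ n ih =>
    intro T hT hA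
    cases T with
    | leaf => simp [leaves] at hT
    | node l r =>
      rw [avoids_t3_node] at hA
      obtain ⟨hl, hr, hshape⟩ := hA
      have hll := one_le_leaves l
      have hrl := one_le_leaves r
      simp [leaves] at hT
      rcases hshape with h1 | h1
      · subst h1
        cases r with
        | leaf =>
          have : n = 0 := by simp [leaves] at hT; omega
          subst this
          exact ⟨[], rfl, rfl⟩
        | node a b =>
          have ha := one_le_leaves a
          have hb := one_le_leaves b
          have h2 : leaves (node a b) = (n - 1) + 2 := by
            simp [leaves] at *; omega
          have hn : n - 1 < n := by
            simp [leaves] at *; omega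
          obtain ⟨bs, hlen, heq⟩ := ih (n - 1) hn _ h2 hr
          refine ⟨true :: bs, ?_, by simp [e3, heq]⟩
          simp [hlen]
          simp [leaves] at *; omega
      · subst h1
        cases l with
        | leaf =>
          have : n = 0 := by simp [leaves] at hT; omega
          subst this
          exact ⟨[], rfl, rfl⟩
        | node a b =>
          have ha := one_le_leaves a
          have hb := one_le_leaves b
          have h2 : leaves (node a b) = (n - 1) + 2 := by
            simp [leaves] at *; omega
          have hn : n - 1 < n := by
            simp [leaves] at *; omega
          obtain ⟨bs, hlen, heq⟩ := ih (n - 1) hn _ h2 hl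
          refine ⟨false :: bs, ?_, by simp [e3, heq]⟩
          simp [hlen]
          simp [leaves] at *; omega

noncomputable def equiv2 (m : ℕ) :
    {bs : List Bool // bs.length = m} ≃ {T : BTree // T.leaves = m + 2 ∧ Avoids T t2} :=
  Equiv.ofBijective
    (fun bs => ⟨e2 bs.1, by rw [e2_leaves, bs.2], e2_avoids bs.1⟩)
    (by
      constructor
      · intro a b h
        simp only [Subtype.mk.injEq] at h
        exact Subtype.ext (e2_inj h)
      · rintro ⟨T, hT, hA⟩
        obtain ⟨bs, hlen, heq⟩ := e2_surj m T hT hA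
        exact ⟨⟨bs, hlen⟩, by simp [heq]⟩)

noncomputable def equiv3 (m : ℕ) :
    {bs : List Bool // bs.length = m} ≃ {T : BTree // T.leaves = m + 2 ∧ Avoids T t3} :=
  Equiv.ofBijective
    (fun bs => ⟨e3 bs.1, by rw [e3_leaves, bs.2], e3_avoids bs.1⟩)
    (by
      constructor
      · intro a b h
        simp only [Subtype.mk.injEq] at h
        exact Subtype.ext (e3_inj h)
      · rintro ⟨T, hT, hA⟩
        obtain ⟨bs, hlen, heq⟩ := e3_surj m T hT hA
        exact ⟨⟨bs, hlen⟩, by simp [heq]⟩)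

end BTree

theorem stmt_11 (n : ℕ) (hn : 1 ≤ n) :
    Nat.card {T : BTree //
      T.leaves = n ∧ T.Avoids (.node .leaf (.node (.node .leaf .leaf) .leaf))} =
    Nat.card {T : BTree //
      T.leaves = n ∧ T.Avoids (.node (.node .leaf .leaf) (.node .leaf .leaf))} := by
  match n, hn with
  | 1, _ =>
    have key : ∀ t : BTree, BTree.Avoids .leaf t →
        Nat.card {T : BTree // T.leaves = 1 ∧ T.Avoids t} = 1 := by
      intro t ht
      rw [Nat.card_eq_one_iff_unique]
      constructor
      · constructor
        rintro ⟨T, hT, _⟩ ⟨T', hT', _⟩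
        have h1 := BTree.eq_leaf_of_leaves_eq_one hT
        have h2 := BTree.eq_leaf_of_leaves_eq_one hT'
        subst h1; subst h2
        rfl
      · exact ⟨⟨.leaf, rfl, ht⟩⟩
    rw [key (.node .leaf (.node (.node .leaf .leaf) .leaf)) rfl,
      key (.node (.node .leaf .leaf) (.node .leaf .leaf)) rfl]
  | (m + 2), _ =>
    exact Nat.card_congr ((BTree.equiv2 m).symm.trans (BTree.equiv3 m))
end

section
/- For n ≥ 2, the number of full binary trees with n leaves that avoid the pattern t2 = node(L, node(node(L,L), L)) equals the number of binary words of length n-2, i.e., 2^(n-2), and an explicit bijection ω is given by ω(node Tl Tr) = κ1(Tr) · κ0(Tl) where κ_i(leaf) = ε and κ_i(T) = i·ω(T) otherwise. -/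
namespace BTree

/-- `kappa i T` is the empty word if `T` is a leaf, and `i · ω(T)` otherwise. -/
def kappa (i : Bool) : BTree → List Bool
  | leaf => []
  | node l r => i :: (kappa true r ++ kappa false l)

/-- `ω(node Tl Tr) = κ₁(Tr) · κ₀(Tl)` (with `true` playing the role of the letter 1). -/
def omega : BTree → List Bool
  | leaf => []
  | node l r => kappa true r ++ kappa false l

end BTree

namespace BTree

abbrev pat : BTree := node leaf (node (node leaf leaf) leaf)

lemma leaves_pos : ∀ T : BTree, 1 ≤ T.leaves
  | leaf => le_refl 1
  | node l r => by simp [leaves]; exact le_add_right (leaves_pos l)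

lemma kappa_length : ∀ (i : Bool) (T : BTree), (kappa i T).length = T.leaves - 1
  | _, leaf => rfl
  | i, node l r => by
    have hl := leaves_pos l
    have hr := leaves_pos r
    simp [kappa, leaves, kappa_length true r, kappa_length false l]
    omega

lemma omega_length (l r : BTree) :
    (omega (node l r)).length = (node l r).leaves - 2 := by
  have hl := leaves_pos l
  have hr := leaves_pos r
  simp [omega, leaves, kappa_length]
  omega

def dec : List Bool → BTree × BTree
  | [] => (leaf, leaf)
  | true :: w => ((dec w).1, node leaf (dec w).2)
  | false :: w => (node (dec w).1 (dec w).2, leaf)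

lemma dec_spec : ∀ w : List Bool,
    omega (node (dec w).1 (dec w).2) = w ∧
    leaves (node (dec w).1 (dec w).2) = w.length + 2 ∧
    Avoids (node (dec w).1 (dec w).2) pat
  | [] => by simp [dec, omega, kappa, leaves, Avoids, Contains, Matches]
  | true :: w => by
    obtain ⟨h1, h2, h3⟩ := dec_spec w
    refine ⟨?_, ?_, ?_⟩
    · simp [dec, omega, kappa] at h1 ⊢
      exact h1
    · simp [dec, leaves] at h2 ⊢
      omega
    · simp [dec, Avoids, Contains, Matches] at h3 ⊢
      tauto
  | false :: w => by
    obtain ⟨h1, h2, h3⟩ := dec_spec w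
    refine ⟨?_, ?_, ?_⟩
    · simp [dec, omega, kappa] at h1 ⊢
      exact h1
    · simp [dec, leaves] at h2 ⊢
      omega
    · simp [dec, Avoids, Contains, Matches] at h3 ⊢
      tauto

lemma dec_omega : ∀ (N : ℕ) (l r : BTree), l.leaves + r.leaves ≤ N →
    Avoids (node l r) pat → dec (omega (node l r)) = (l, r)
  | 0, l, r, h, _ => by have := leaves_pos l; omega
  | N + 1, l, r, h, hav => by
    cases r with
    | leaf =>
      cases l with
      | leaf => simp [omega, kappa, dec]
      | node a b =>
        have hav' : Avoids (node a b) pat := by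
          simp [Avoids, Contains, Matches] at hav ⊢; tauto
        have hrec := dec_omega N a b (by simp [leaves] at h ⊢; omega) hav'
        simp [omega, kappa, dec]
        simp [omega] at hrec
        simp [hrec]
    | node rl rr =>
      have hrl : rl = leaf := by
        cases rl with
        | leaf => rfl
        | node c d =>
          exfalso
          simp [Avoids, Contains, Matches] at hav
      subst hrl
      have hav' : Avoids (node l rr) pat := by
        simp [Avoids, Contains, Matches] at hav ⊢; tauto
      have hrec := dec_omega N l rr (by simp [leaves] at h ⊢; omega) hav'
      simp [omega, kappa, dec]
      simp [omega] at hrec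
      simp [hrec]

end BTree

theorem stmt_18 (n : ℕ) (hn : 2 ≤ n) :
    Nat.card {T : BTree //
        T.leaves = n ∧ T.Avoids (.node .leaf (.node (.node .leaf .leaf) .leaf))} =
      2 ^ (n - 2) ∧
    Set.BijOn BTree.omega
      {T : BTree |
        T.leaves = n ∧ T.Avoids (.node .leaf (.node (.node .leaf .leaf) .leaf))}
      {w : List Bool | w.length = n - 2} := by
  classical
  have hbij : Set.BijOn BTree.omega
      {T : BTree | T.leaves = n ∧ T.Avoids BTree.pat}
      {w : List Bool | w.length = n - 2} := by
    refine ⟨?_, ?_, ?_⟩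
    · rintro T ⟨hTl, hTa⟩
      cases T with
      | leaf => simp [BTree.leaves] at hTl; omega
      | node l r =>
        simp only [Set.mem_setOf_eq, BTree.omega_length, hTl]
    · rintro T1 ⟨hT1l, hT1a⟩ T2 ⟨hT2l, hT2a⟩ heq
      cases T1 with
      | leaf => simp [BTree.leaves] at hT1l; omega
      | node l1 r1 =>
        cases T2 with
        | leaf => simp [BTree.leaves] at hT2l; omega
        | node l2 r2 =>
          have h1 := BTree.dec_omega (l1.leaves + r1.leaves) l1 r1 le_rfl hT1a
          have h2 := BTree.dec_omega (l2.leaves + r2.leaves) l2 r2 le_rfl hT2a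
          rw [heq] at h1
          rw [h2] at h1
          injection h1 with ha hb
          rw [ha, hb]
    · rintro w hw
      obtain ⟨h1, h2, h3⟩ := BTree.dec_spec w
      refine ⟨BTree.node (BTree.dec w).1 (BTree.dec w).2, ⟨?_, h3⟩, h1⟩
      simp only [Set.mem_setOf_eq] at hw
      rw [h2, hw]
      omega
  constructor
  · have e1 : {T : BTree //
        T.leaves = n ∧ T.Avoids (.node .leaf (.node (.node .leaf .leaf) .leaf))} ≃
        ↥{w : List Bool | w.length = n - 2} := hbij.equiv
    have e2 : ↥{w : List Bool | w.length = n - 2} ≃ List.Vector Bool (n - 2) :=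
      Equiv.subtypeEquivRight fun w => Iff.rfl
    rw [Nat.card_congr (e1.trans e2), Nat.card_eq_fintype_card, card_vector]
    simp
  · exact hbij
end
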